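/- For every positive symmetric n×n real matrix H and every real k < 0, one has (det H)^k ≥ 1 - n·k + k·trace(H). -/

import Mathlib

open Matrix

theorem det_rpow_ge_of_posDef {n : ℕ} (hn : 1 ≤ n)
    (H : Matrix (Fin n) (Fin n) ℝ) (hH : H.PosDef) (hsymm : H.IsSymm)
    (k : ℝ) (hk : k < 0) :
    H.det ^ k ≥ 1 - n * k + k * H.trace := by
  have hHe : H.IsHermitian := hH.1
  have hdet : 0 < H.det := hH.det_pos
  have hEig : ∀ i, 0 < hHe.eigenvalues i := hH.eigenvalues_pos
  -- log det ≤ trace - n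
  have hdetprod : H.det = ∏ i, hHe.eigenvalues i := by
    simpa using hHe.det_eq_prod_eigenvalues
  have htr : H.trace = ∑ i, hHe.eigenvalues i := by
    conv_lhs => rw [hHe.spectral_theorem]
    rw [Unitary.conjStarAlgAut_apply, Matrix.trace_mul_cycle, Unitary.coe_star_mul_self, Matrix.one_mul,
      Matrix.trace_diagonal]
    simp
  have hlog : Real.log H.det ≤ H.trace - n := by
    rw [hdetprod, Real.log_prod (fun i _ => (hEig i).ne'), htr]
    have : ∀ i ∈ Finset.univ, Real.log (hHe.eigenvalues i) ≤ hHe.eigenvalues i - 1 :=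
      fun i _ => Real.log_le_sub_one_of_pos (hEig i)
    calc ∑ i, Real.log (hHe.eigenvalues i) ≤ ∑ i, (hHe.eigenvalues i - 1) :=
          Finset.sum_le_sum this
      _ = (∑ i, hHe.eigenvalues i) - n := by
          rw [Finset.sum_sub_distrib]
          simp
  have h1 : H.det ^ k = Real.exp (Real.log H.det * k) :=
    Real.rpow_def_of_pos hdet k
  have h2 : Real.log H.det * k + 1 ≤ Real.exp (Real.log H.det * k) :=
    Real.add_one_le_exp _
  have h3 : k * (H.trace - n) ≤ k * Real.log H.det :=
    mul_le_mul_of_nonpos_left hlog hk.le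
  rw [ge_iff_le, h1]
  nlinarith [h2, h3]
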